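/- Let G be a finite connected simple graph with vertices v₁,…,v_n and sink q, let M be its n×n reduced Laplacian (M_{ii} = deg(v_i), M_{ij} = −1 if {v_i,v_j} is an edge and 0 otherwise for i ≠ j), and let L = M + N where N is a symmetric integer matrix with entries in {0,2} that is 0 on the diagonal and supported on positions where M_{ij} = −1; assume L is invertible over ℚ. Suppose e_G ∈ ℤⁿ has all entries ≥ 0, e_G is a critical configuration for the chip-firing pair (M, M), and e_G = M·v for some v ∈ ℤⁿ. Then the vector e = L·M⁻¹·e_G (computed over ℚ) has integer entries, e lies in L·ℤⁿ, and e is a critical configuration for the chip-firing pair (L, M). -/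
import Mathlib


open Matrix

/-- `c ∈ S⁺` for the chip-firing pair `(L, M)`: every entry of `M·L⁻¹·c` (over ℚ) is
nonnegative. -/
def cfValid {n : ℕ} (L M : Matrix (Fin n) (Fin n) ℤ) (c : Fin n → ℤ) : Prop :=
  ∀ i, 0 ≤ (((M.map (Int.cast : ℤ → ℚ)) * (L.map (Int.cast : ℤ → ℚ))⁻¹).mulVec
    (fun j => (c j : ℚ))) i

/-- `c` is stable for the pair `(L, M)`: no single site can be legally fired. -/
def cfStable {n : ℕ} (L M : Matrix (Fin n) (Fin n) ℤ) (c : Fin n → ℤ) : Prop :=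
  ∀ i, ¬ cfValid L M (c - L.mulVec (Pi.single i 1))

/-- There is a legal firing sequence from `d` to `c`: firing the sites in the list `l`
one at a time, every intermediate configuration is valid and the final result is `c`. -/
def cfLegal {n : ℕ} (L M : Matrix (Fin n) (Fin n) ℤ) (d c : Fin n → ℤ) : Prop :=
  ∃ l : List (Fin n),
    (∀ t ≤ l.length, cfValid L M (d - L.mulVec (fun i => ((l.take t).count i : ℤ)))) ∧
    c = d - L.mulVec (fun i => (l.count i : ℤ))

/-- `c` is reachable for the pair `(L, M)`: there is a valid configuration `d` from which
every site can be fired, together with a legal firing sequence from `d` to `c`. -/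
def cfReachable {n : ℕ} (L M : Matrix (Fin n) (Fin n) ℤ) (c : Fin n → ℤ) : Prop :=
  ∃ d : Fin n → ℤ, cfValid L M d ∧
    (∀ i, cfValid L M (d - L.mulVec (Pi.single i 1))) ∧ cfLegal L M d c

/-- `c` is critical for the pair `(L, M)`: valid, stable and reachable. -/
def cfCritical {n : ℕ} (L M : Matrix (Fin n) (Fin n) ℤ) (c : Fin n → ℤ) : Prop :=
  cfValid L M c ∧ cfStable L M c ∧ cfReachable L M c

/-- `c` is z-superstable for the pair `(L, M)`: `c` is valid and for every nonzero
nonnegative integer vector `z`, `c - L·z` is not valid. -/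
def cfZSuperstable {n : ℕ} (L M : Matrix (Fin n) (Fin n) ℤ) (c : Fin n → ℤ) : Prop :=
  cfValid L M c ∧
    ∀ z : Fin n → ℤ, (∀ i, 0 ≤ z i) → z ≠ 0 → ¬ cfValid L M (c - L.mulVec z)


lemma castMulVec {n : ℕ} (A : Matrix (Fin n) (Fin n) ℤ) (u : Fin n → ℤ) :
    (fun j => ((A.mulVec u) j : ℚ)) = (A.map (Int.cast : ℤ → ℚ)).mulVec (fun j => (u j : ℚ)) := by
  funext j
  simp [Matrix.mulVec, dotProduct, Matrix.map_apply]

lemma cfValid_mulVec {n : ℕ} (L M : Matrix (Fin n) (Fin n) ℤ)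
    (hL : IsUnit (L.map (Int.cast : ℤ → ℚ))) (u : Fin n → ℤ) :
    cfValid L M (L.mulVec u) ↔ ∀ i, 0 ≤ (M.mulVec u) i := by
  unfold cfValid
  rw [castMulVec, Matrix.mulVec_mulVec, Matrix.mul_assoc,
    Matrix.nonsing_inv_mul _ ((Matrix.isUnit_iff_isUnit_det _).mp hL),
    Matrix.mul_one, ← castMulVec]
  simp [Int.cast_nonneg]

lemma cfValid_self {n : ℕ} (M : Matrix (Fin n) (Fin n) ℤ)
    (hM : IsUnit (M.map (Int.cast : ℤ → ℚ))) (c : Fin n → ℤ) :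
    cfValid M M c ↔ ∀ i, 0 ≤ c i := by
  unfold cfValid
  rw [Matrix.mul_nonsing_inv _ ((Matrix.isUnit_iff_isUnit_det _).mp hM), Matrix.one_mulVec]
  simp [Int.cast_nonneg]

/-- Theorem `CriticalityIdentity`: for a signed graph `G_φ` with underlying connected
graph `G` (sink `q = Fin.last n`, nonsink vertices `i.castSucc`), reduced Laplacian `M`
and reduced signed Laplacian `L = M + N`, if `e_G` is the identity of the critical group
of `G` (nonnegative, critical for the pair `(M, M)`, and in the image of `M`), then
`e = L·M⁻¹·e_G` has integer entries, lies in `L·ℤⁿ`, and is critical for `(L, M)`. -/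
theorem stmt14 (n : ℕ) (hn : 1 ≤ n)
    (G : SimpleGraph (Fin (n + 1))) [DecidableRel G.Adj] (hconn : G.Connected)
    (M N : Matrix (Fin n) (Fin n) ℤ)
    (hM : ∀ i j : Fin n, M i j =
      if i = j then (G.degree i.castSucc : ℤ)
      else if G.Adj i.castSucc j.castSucc then -1 else 0)
    (hNsymm : ∀ i j, N i j = N j i)
    (hNdiag : ∀ i, N i i = 0)
    (hNval : ∀ i j, N i j = 0 ∨ N i j = 2)
    (hNsupp : ∀ i j, N i j ≠ 0 → M i j = -1)
    (L : Matrix (Fin n) (Fin n) ℤ) (hLdef : L = M + N)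
    (hLinv : IsUnit (L.map (Int.cast : ℤ → ℚ)))
    (eG : Fin n → ℤ) (heG0 : ∀ i, 0 ≤ eG i)
    (heGcrit : cfCritical M M eG)
    (v : Fin n → ℤ) (heGim : eG = M.mulVec v) :
    ∃ e : Fin n → ℤ,
      (∀ i, (e i : ℚ) =
        (((L.map (Int.cast : ℤ → ℚ)) * (M.map (Int.cast : ℤ → ℚ))⁻¹).mulVec
          (fun j => (eG j : ℚ))) i) ∧
      (∃ w : Fin n → ℤ, e = L.mulVec w) ∧
      cfCritical L M e := by
  have hMinv : IsUnit (M.map (Int.cast : ℤ → ℚ)) := by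
    by_contra hNM
    have h0 : (M.map (Int.cast : ℤ → ℚ))⁻¹ = 0 :=
      Matrix.nonsing_inv_apply_not_isUnit _
        (fun h => hNM ((Matrix.isUnit_iff_isUnit_det _).mpr h))
    have hst := heGcrit.2.1 ⟨0, hn⟩
    apply hst
    intro i
    rw [h0, Matrix.mul_zero, Matrix.zero_mulVec]
    exact le_refl 0
  obtain ⟨hval, hstab, d₀, hd₀v, hd₀f, l, hsteps, hfinal⟩ := heGcrit
  set zf : Fin n → ℤ := fun i => (l.count i : ℤ) with hzf
  have hd₀ : M.mulVec (v + zf) = d₀ := by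
    rw [Matrix.mulVec_add, ← heGim, hfinal, sub_add_cancel]
  refine ⟨L.mulVec v, ?_, ⟨v, rfl⟩, ?_, ?_, ?_⟩
  · intro i
    have key : (fun j => ((L.mulVec v) j : ℚ)) =
        ((L.map (Int.cast : ℤ → ℚ)) * (M.map (Int.cast : ℤ → ℚ))⁻¹).mulVec
          (fun j => (eG j : ℚ)) := by
      rw [heGim, castMulVec M v, Matrix.mulVec_mulVec, Matrix.mul_assoc,
        Matrix.nonsing_inv_mul _ ((Matrix.isUnit_iff_isUnit_det _).mp hMinv),
        Matrix.mul_one, castMulVec]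
    exact congrFun key i
  · rw [cfValid_mulVec L M hLinv, ← heGim]
    exact heG0
  · intro i
    rw [← Matrix.mulVec_sub, cfValid_mulVec L M hLinv]
    intro h
    apply hstab i
    rw [cfValid_self M hMinv]
    intro j
    have hj := h j
    rwa [Matrix.mulVec_sub, ← heGim] at hj
  · refine ⟨L.mulVec (v + zf), ?_, ?_, l, ?_, ?_⟩
    · rw [cfValid_mulVec L M hLinv, hd₀]
      exact (cfValid_self M hMinv d₀).mp hd₀v
    · intro i
      rw [← Matrix.mulVec_sub, cfValid_mulVec L M hLinv]
      intro j
      rw [Matrix.mulVec_sub, hd₀]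
      exact (cfValid_self M hMinv _).mp (hd₀f i) j
    · intro t ht
      rw [← Matrix.mulVec_sub, cfValid_mulVec L M hLinv]
      intro j
      rw [Matrix.mulVec_sub, hd₀]
      exact (cfValid_self M hMinv _).mp (hsteps t ht) j
    · rw [← Matrix.mulVec_sub, add_sub_cancel_right]
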